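/- arXiv:1909.09298 — 4 statements merged into one kernel-verified Lean document; each statement's English description precedes it below -/
import Mathlib

section
/- In a finite graph of maximum degree Δ, the number of connected subgraphs on k vertices containing a fixed vertex v is at most (eΔ)^k. -/
open Finset
set_option linter.unusedSectionVars false
set_option linter.unnecessarySimpa false
set_option maxHeartbeats 1000000

namespace ConnSubAux

variable {V : Type*} [Fintype V] [DecidableEq V] [LinearOrder V]
variable (G : SimpleGraph V) [DecidableRel G.Adj]

open Classical in
noncomputable def elig (S P : Finset V) : Finset V :=
  S.filter (fun u => u ∉ P ∧ ∃ w ∈ P, G.Adj w u)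

noncomputable def step (S P : Finset V) (v : V) : V :=
  if h : (elig G S P).Nonempty then (elig G S P).min' h else v

noncomputable def Pset (S : Finset V) (v : V) : ℕ → Finset V
  | 0 => {v}
  | (i+1) => insert (step G S (Pset S v i) v) (Pset S v i)

noncomputable def lfun (S : Finset V) (v : V) : ℕ → V
  | 0 => v
  | (i+1) => step G S (Pset G S v i) v

def nbrList (u : V) : List V := (G.neighborFinset u).sort (· ≤ ·)

def idx (u w : V) : ℕ := (nbrList G u).idxOf w

def nbr (u : V) (a : ℕ) : V := (nbrList G u).getD a u

open Classical in
noncomputable def parentIdx (S : Finset V) (v : V) (p : ℕ) : ℕ :=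
  if h : ∃ j, j < p ∧ G.Adj (lfun G S v j) (lfun G S v p) then Nat.find h else 0

open Classical in
noncomputable def code (S : Finset V) (v : V) (k Δ : ℕ) (hk : 0 < k) (hΔ : 0 < Δ) :
    Finset (Fin k × Fin Δ) :=
  (Finset.Ico 1 k).image fun p =>
    (⟨parentIdx G S v p % k, Nat.mod_lt _ hk⟩,
     ⟨idx G (lfun G S v (parentIdx G S v p)) (lfun G S v p) % Δ, Nat.mod_lt _ hΔ⟩)

open Classical in
noncomputable def cand (k Δ : ℕ) (c : Finset (Fin k × Fin Δ)) (f : ℕ → V) (i : ℕ) : Finset V :=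
  Finset.univ.filter fun u => ∃ q ∈ c, (q.1 : ℕ) ≤ i ∧ u = nbr G (f q.1) (q.2 : ℕ) ∧
    u ∉ (Finset.range (i+1)).image f

variable {G}

lemma mem_elig {S P : Finset V} {u : V} :
    u ∈ elig G S P ↔ u ∈ S ∧ u ∉ P ∧ ∃ w ∈ P, G.Adj w u := by
  classical
  simp [elig]

lemma mem_cand {k Δ : ℕ} {c : Finset (Fin k × Fin Δ)} {f : ℕ → V} {i : ℕ} {u : V} :
    u ∈ cand G k Δ c f i ↔ ∃ q ∈ c, (q.1 : ℕ) ≤ i ∧ u = nbr G (f q.1) (q.2 : ℕ) ∧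
      u ∉ (Finset.range (i+1)).image f := by
  classical
  simp [cand]

lemma mem_nbrList {u w : V} : w ∈ nbrList G u ↔ G.Adj u w := by
  simp [nbrList, SimpleGraph.mem_neighborFinset]

lemma idx_lt_degree {u w : V} (h : G.Adj u w) : idx G u w < G.degree u := by
  have h1 : w ∈ nbrList G u := mem_nbrList.2 h
  have := List.idxOf_lt_length_iff.2 h1
  simpa [nbrList, idx] using this

lemma nbr_idx {u w : V} (h : G.Adj u w) : nbr G u (idx G u w) = w := by
  have h1 : w ∈ nbrList G u := mem_nbrList.2 h
  have h2 : idx G u w < (nbrList G u).length := List.idxOf_lt_length_iff.2 h1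
  rw [nbr, List.getD_eq_getElem _ _ h2]
  exact List.getElem_idxOf h2

lemma v_mem_Pset (S : Finset V) (v : V) (n : ℕ) : v ∈ Pset G S v n := by
  induction n with
  | zero => simp [Pset]
  | succ i ih => simp [Pset, ih]

lemma Pset_subset_succ (S : Finset V) (v : V) (n : ℕ) :
    Pset G S v n ⊆ Pset G S v (n+1) := by
  simp [Pset, Finset.subset_insert]

lemma Pset_mono (S : Finset V) (v : V) {m n : ℕ} (h : m ≤ n) :
    Pset G S v m ⊆ Pset G S v n := by
  induction n with
  | zero => simp_all
  | succ i ih =>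
    rcases Nat.lt_or_ge m (i+1) with h' | h'
    · exact (ih (by omega)).trans (Pset_subset_succ S v i)
    · have : m = i + 1 := by omega
      subst this; rfl

lemma Pset_eq_image (S : Finset V) (v : V) (n : ℕ) :
    Pset G S v n = (Finset.range (n+1)).image (lfun G S v) := by
  induction n with
  | zero => simp [Pset, lfun]
  | succ i ih =>
    rw [Finset.range_add_one, Finset.image_insert, ← ih]
    rfl

lemma lfun_mem_Pset (S : Finset V) (v : V) {j n : ℕ} (h : j ≤ n) :
    lfun G S v j ∈ Pset G S v n := by
  rw [Pset_eq_image]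
  exact Finset.mem_image_of_mem _ (Finset.mem_range.2 (by omega))

lemma Pset_subset (S : Finset V) {v : V} (hv : v ∈ S) (n : ℕ) :
    Pset G S v n ⊆ S := by
  induction n with
  | zero => simpa [Pset]
  | succ i ih =>
    intro u hu
    rw [Pset] at hu
    rcases Finset.mem_insert.1 hu with h | h
    · subst h
      unfold step
      split
      · next hne => exact (mem_elig.1 (Finset.min'_mem _ hne)).1
      · exact hv
    · exact ih h

lemma exists_adj_crossing {α : Type*} (H : SimpleGraph α) (Q : Set α) :
    ∀ {a b : α}, H.Walk a b → a ∈ Q → b ∉ Q → ∃ x ∈ Q, ∃ y, y ∉ Q ∧ H.Adj x y := by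
  intro a b w
  induction w with
  | nil => intro h h'; exact absurd h h'
  | @cons a c b hadj p ih =>
    intro ha hb
    by_cases hc : c ∈ Q
    · exact ih hc hb
    · exact ⟨a, ha, c, hc, hadj⟩

lemma elig_nonempty {S P : Finset V} {v : V}
    (hconn : (SimpleGraph.induce (↑S : Set V) G).Connected)
    (hv : v ∈ P) (hPS : P ⊆ S) (hvS : v ∈ S) (hne : P ≠ S) :
    (elig G S P).Nonempty := by
  have : ∃ u, u ∈ S ∧ u ∉ P := by
    by_contra h
    push_neg at h
    exact hne (Finset.Subset.antisymm hPS (fun u hu => h u hu))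
  obtain ⟨u, huS, huP⟩ := this
  have hreach := hconn.preconnected ⟨v, by simpa using hvS⟩ ⟨u, by simpa using huS⟩
  obtain ⟨w⟩ := hreach
  have := exists_adj_crossing (SimpleGraph.induce (↑S : Set V) G)
    {x : (↑S : Set V) | (x : V) ∈ P} w (by simpa using hv) (by simpa using huP)
  obtain ⟨x, hx, y, hy, hadj⟩ := this
  exact ⟨(y : V), mem_elig.2 ⟨by simpa using y.2, by simpa using hy, (x : V), hx, hadj⟩⟩

lemma min'_congr {s t : Finset V} (h : s = t) (hs : s.Nonempty) (ht : t.Nonempty) :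
    s.min' hs = t.min' ht := by subst h; rfl

section Main

variable {S : Finset V} {v : V} {k : ℕ}
variable (hv : v ∈ S) (hcard : S.card = k)
variable (hconn : (SimpleGraph.induce (↑S : Set V) G).Connected)

include hv hcard hconn

lemma Pset_card : ∀ {n : ℕ}, n + 1 ≤ k → (Pset G S v n).card = n + 1 := by
  intro n
  induction n with
  | zero => intro _; simp [Pset]
  | succ i ih =>
    intro h
    have hci : (Pset G S v i).card = i + 1 := ih (by omega)
    have hne : Pset G S v i ≠ S := by
      intro he; rw [he, hcard] at hci; omega
    have hE : (elig G S (Pset G S v i)).Nonempty :=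
      elig_nonempty hconn (v_mem_Pset S v i) (Pset_subset S hv i) hv hne
    have hstep : step G S (Pset G S v i) v ∈ elig G S (Pset G S v i) := by
      unfold step
      rw [dif_pos hE]
      exact Finset.min'_mem _ hE
    have hnotmem : step G S (Pset G S v i) v ∉ Pset G S v i :=
      (mem_elig.1 hstep).2.1
    rw [Pset, Finset.card_insert_of_notMem hnotmem, hci]

lemma Pset_eq_S (hk : 1 ≤ k) : Pset G S v (k-1) = S := by
  have h1 : (Pset G S v (k-1)).card = k := by
    have := Pset_card (v := v) hv hcard hconn (n := k - 1) (by omega)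
    omega
  exact Finset.eq_of_subset_of_card_le (Pset_subset S hv _) (by rw [hcard, h1])

lemma lfun_succ_mem_elig {i : ℕ} (h : i + 2 ≤ k) :
    lfun G S v (i+1) ∈ elig G S (Pset G S v i) := by
  have hci : (Pset G S v i).card = i + 1 := Pset_card hv hcard hconn (by omega)
  have hne : Pset G S v i ≠ S := by
    intro he; rw [he, hcard] at hci; omega
  have hE : (elig G S (Pset G S v i)).Nonempty :=
    elig_nonempty hconn (v_mem_Pset S v i) (Pset_subset S hv i) hv hne
  show step G S (Pset G S v i) v ∈ _
  unfold step
  rw [dif_pos hE]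
  exact Finset.min'_mem _ hE

lemma lfun_not_mem {i : ℕ} (h : i + 2 ≤ k) :
    lfun G S v (i+1) ∉ Pset G S v i :=
  (mem_elig.1 (lfun_succ_mem_elig hv hcard hconn h)).2.1

lemma lfun_inj {p q : ℕ} (hp : p < k) (hq : q < k) (he : lfun G S v p = lfun G S v q) :
    p = q := by
  rcases Nat.lt_trichotomy p q with h | h | h
  · obtain ⟨m, rfl⟩ : ∃ m, q = m + 1 := ⟨q - 1, by omega⟩
    exact absurd (he ▸ lfun_mem_Pset S v (show p ≤ m by omega))
      (lfun_not_mem hv hcard hconn (by omega))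
  · exact h
  · obtain ⟨m, rfl⟩ : ∃ m, p = m + 1 := ⟨p - 1, by omega⟩
    exact absurd (he ▸ lfun_mem_Pset S v (show q ≤ m by omega))
      (lfun_not_mem hv hcard hconn (by omega))

lemma parent_exists {p : ℕ} (hp : 1 ≤ p) (hpk : p < k) :
    ∃ j, j < p ∧ G.Adj (lfun G S v j) (lfun G S v p) := by
  obtain ⟨i, rfl⟩ : ∃ i, p = i + 1 := ⟨p - 1, by omega⟩
  have := lfun_succ_mem_elig hv hcard hconn (show i + 2 ≤ k by omega)
  obtain ⟨-, -, w, hwP, hadj⟩ := mem_elig.1 this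
  rw [Pset_eq_image] at hwP
  obtain ⟨j, hj, rfl⟩ := Finset.mem_image.1 hwP
  have hj' := Finset.mem_range.1 hj
  exact ⟨j, by omega, hadj⟩

lemma parent_spec {p : ℕ} (hp : 1 ≤ p) (hpk : p < k) :
    parentIdx G S v p < p ∧ G.Adj (lfun G S v (parentIdx G S v p)) (lfun G S v p) := by
  classical
  have hex := parent_exists hv hcard hconn hp hpk
  rw [parentIdx, dif_pos hex]
  exact ⟨(Nat.find_spec hex).1, (Nat.find_spec hex).2⟩

lemma parent_le {p j : ℕ} (hp : 1 ≤ p) (hpk : p < k)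
    (hj : j < p) (hadj : G.Adj (lfun G S v j) (lfun G S v p)) :
    parentIdx G S v p ≤ j := by
  classical
  have hex := parent_exists hv hcard hconn hp hpk
  rw [parentIdx, dif_pos hex]
  exact Nat.find_min' hex ⟨hj, hadj⟩

lemma code_card (hk : 0 < k) (hΔ0 : 0 < Δ) (hdeg : ∀ u, G.degree u ≤ Δ) :
    (code G S v k Δ hk hΔ0).card = k - 1 := by
  rw [code, Finset.card_image_of_injOn, Nat.card_Ico]
  intro p hp q hq he
  rw [Finset.coe_Ico, Set.mem_Ico] at hp hq
  have hps := parent_spec hv hcard hconn hp.1 hp.2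
  have hqs := parent_spec hv hcard hconn hq.1 hq.2
  have hpm : parentIdx G S v p % k = parentIdx G S v p := Nat.mod_eq_of_lt (by omega)
  have hqm : parentIdx G S v q % k = parentIdx G S v q := Nat.mod_eq_of_lt (by omega)
  have hpi : idx G (lfun G S v (parentIdx G S v p)) (lfun G S v p) % Δ
      = idx G (lfun G S v (parentIdx G S v p)) (lfun G S v p) :=
    Nat.mod_eq_of_lt (lt_of_lt_of_le (idx_lt_degree hps.2) (hdeg _))
  have hqi : idx G (lfun G S v (parentIdx G S v q)) (lfun G S v q) % Δ
      = idx G (lfun G S v (parentIdx G S v q)) (lfun G S v q) :=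
    Nat.mod_eq_of_lt (lt_of_lt_of_le (idx_lt_degree hqs.2) (hdeg _))
  rw [Prod.mk.injEq, Fin.mk.injEq, Fin.mk.injEq] at he
  rw [hpm, hqm] at he
  obtain ⟨e1, e2⟩ := he
  rw [hpi, hqi] at e2
  have hlf : lfun G S v p = lfun G S v q := by
    have d1 := nbr_idx hps.2
    have d2 := nbr_idx hqs.2
    rw [← d1, ← d2, e2, e1]
  exact lfun_inj hv hcard hconn (by omega) (by omega) hlf

lemma elig_eq_cand {Δ i : ℕ} (hik : i + 2 ≤ k) (hk : 0 < k) (hΔ0 : 0 < Δ)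
    (hdeg : ∀ u, G.degree u ≤ Δ) :
    elig G S (Pset G S v i) = cand G k Δ (code G S v k Δ hk hΔ0) (lfun G S v) i := by
  ext u
  rw [mem_elig, mem_cand]
  constructor
  · rintro ⟨huS, huP, w, hwP, hadj⟩
    have hS' : u ∈ (Finset.range ((k-1)+1)).image (lfun G S v) := by
      rw [← Pset_eq_image, Pset_eq_S hv hcard hconn (by omega)]
      exact huS
    obtain ⟨p, hp, rfl⟩ := Finset.mem_image.1 hS'
    have hpk : p < k := by have := Finset.mem_range.1 hp; omega
    have hp1 : 1 ≤ p := by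
      rcases Nat.eq_zero_or_pos p with rfl | h
      · exact absurd (v_mem_Pset S v i) huP
      · exact h
    have hip : i < p := by
      by_contra h
      push_neg at h
      exact huP (lfun_mem_Pset S v h)
    rw [Pset_eq_image] at hwP
    obtain ⟨j, hj, rfl⟩ := Finset.mem_image.1 hwP
    have hji : j ≤ i := by have := Finset.mem_range.1 hj; omega
    have hple : parentIdx G S v p ≤ j := parent_le hv hcard hconn hp1 hpk (by omega) hadj
    have hps := parent_spec hv hcard hconn hp1 hpk
    have hpm : parentIdx G S v p % k = parentIdx G S v p := Nat.mod_eq_of_lt (by omega)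
    have hpi : idx G (lfun G S v (parentIdx G S v p)) (lfun G S v p) % Δ
        = idx G (lfun G S v (parentIdx G S v p)) (lfun G S v p) :=
      Nat.mod_eq_of_lt (lt_of_lt_of_le (idx_lt_degree hps.2) (hdeg _))
    refine ⟨(⟨parentIdx G S v p % k, Nat.mod_lt _ hk⟩,
        ⟨idx G (lfun G S v (parentIdx G S v p)) (lfun G S v p) % Δ, Nat.mod_lt _ hΔ0⟩),
      ?_, ?_, ?_, ?_⟩
    · rw [code]
      exact Finset.mem_image_of_mem _ (Finset.mem_Ico.2 ⟨hp1, hpk⟩)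
    · show parentIdx G S v p % k ≤ i
      rw [hpm]
      omega
    · show lfun G S v p = nbr G (lfun G S v (parentIdx G S v p % k))
        (idx G (lfun G S v (parentIdx G S v p)) (lfun G S v p) % Δ)
      rw [hpm, hpi]
      exact (nbr_idx hps.2).symm
    · rw [← Pset_eq_image]
      exact huP
  · rintro ⟨q, hq, hqle, hu, hnot⟩
    rw [code] at hq
    obtain ⟨p, hp, rfl⟩ := Finset.mem_image.1 hq
    obtain ⟨hp1, hpk⟩ := Finset.mem_Ico.1 hp
    have hps := parent_spec hv hcard hconn hp1 hpk
    have hpm : parentIdx G S v p % k = parentIdx G S v p := Nat.mod_eq_of_lt (by omega)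
    have hpi : idx G (lfun G S v (parentIdx G S v p)) (lfun G S v p) % Δ
        = idx G (lfun G S v (parentIdx G S v p)) (lfun G S v p) :=
      Nat.mod_eq_of_lt (lt_of_lt_of_le (idx_lt_degree hps.2) (hdeg _))
    have hqle' : parentIdx G S v p ≤ i := by
      have h' : parentIdx G S v p % k ≤ i := hqle
      omega
    have hu' : u = lfun G S v p := by
      have h' : u = nbr G (lfun G S v (parentIdx G S v p % k))
          (idx G (lfun G S v (parentIdx G S v p)) (lfun G S v p) % Δ) := hu
      rw [hpm, hpi] at h'
      rw [h']
      exact nbr_idx hps.2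
    subst hu'
    refine ⟨?_, ?_, lfun G S v (parentIdx G S v p), ?_, hps.2⟩
    · have hm := lfun_mem_Pset (G := G) S v (show p ≤ k - 1 by omega)
      rw [Pset_eq_S hv hcard hconn (show 1 ≤ k by omega)] at hm
      exact hm
    · rw [Pset_eq_image]
      exact hnot
    · exact lfun_mem_Pset S v hqle'

lemma lfun_succ_eq {Δ i : ℕ} (hik : i + 2 ≤ k) (hk : 0 < k) (hΔ0 : 0 < Δ)
    (hdeg : ∀ u, G.degree u ≤ Δ) :
    ∃ (h : (cand G k Δ (code G S v k Δ hk hΔ0) (lfun G S v) i).Nonempty),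
      lfun G S v (i+1) = Finset.min' _ h := by
  have hci : (Pset G S v i).card = i + 1 := Pset_card hv hcard hconn (by omega)
  have hne : Pset G S v i ≠ S := by
    intro he; rw [he, hcard] at hci; omega
  have hE : (elig G S (Pset G S v i)).Nonempty :=
    elig_nonempty hconn (v_mem_Pset S v i) (Pset_subset S hv i) hv hne
  have heq := elig_eq_cand hv hcard hconn hik hk hΔ0 hdeg
  refine ⟨heq ▸ hE, ?_⟩
  show step G S (Pset G S v i) v = _
  unfold step
  rw [dif_pos hE]
  exact min'_congr heq hE (heq ▸ hE)

end Main

lemma cand_congr {k Δ : ℕ} {c : Finset (Fin k × Fin Δ)} {f g : ℕ → V} {i : ℕ}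
    (hfg : ∀ j ≤ i, f j = g j) : cand G k Δ c f i = cand G k Δ c g i := by
  classical
  have himg : (Finset.range (i+1)).image f = (Finset.range (i+1)).image g :=
    Finset.image_congr (fun j hj => hfg j (by
      rw [Finset.coe_range, Set.mem_Iio] at hj; omega))
  ext u
  rw [mem_cand, mem_cand]
  constructor
  · rintro ⟨q, hq, hqi, hu, hnot⟩
    exact ⟨q, hq, hqi, by rw [hu, hfg _ hqi], by rw [← himg]; exact hnot⟩
  · rintro ⟨q, hq, hqi, hu, hnot⟩
    exact ⟨q, hq, hqi, by rw [hu, hfg _ hqi], by rw [himg]; exact hnot⟩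

end ConnSubAux
section Numeric

lemma succ_pow_le (n : ℕ) : ((n:ℝ)+1)^n ≤ Real.exp 1 * (n:ℝ)^n := by
  rcases Nat.eq_zero_or_pos n with rfl | hn
  · simpa using Real.one_le_exp (by norm_num)
  · have hn' : (0:ℝ) < n := by exact_mod_cast hn
    have h1 : (n:ℝ) + 1 ≤ Real.exp (1/n) * n := by
      have := Real.add_one_le_exp (1/(n:ℝ))
      have h2 : ((1/(n:ℝ)) + 1) * n ≤ Real.exp (1/n) * n :=
        mul_le_mul_of_nonneg_right this (le_of_lt hn')
      calc (n:ℝ) + 1 = ((1/(n:ℝ)) + 1) * n := by field_simp; ring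
        _ ≤ _ := h2
    calc ((n:ℝ)+1)^n ≤ (Real.exp (1/n) * n)^n :=
          pow_le_pow_left₀ (by positivity) h1 n
      _ = Real.exp (1/n) ^ n * (n:ℝ)^n := mul_pow _ _ _
      _ = Real.exp 1 * (n:ℝ)^n := by
          rw [← Real.exp_nat_mul]
          congr 1
          field_simp
lemma pow_le_exp_factorial (n : ℕ) :
    (n:ℝ)^n ≤ Real.exp 1 ^ n * (n.factorial : ℝ) := by
  induction n with
  | zero => simp
  | succ m ih =>
    have h1 : ((m:ℝ)+1)^(m+1) = ((m:ℝ)+1)^m * ((m:ℝ)+1) := pow_succ _ _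
    have h2 : ((m:ℝ)+1)^m ≤ Real.exp 1 * (m:ℝ)^m := succ_pow_le m
    have h3 : (0:ℝ) ≤ (m:ℝ)+1 := by positivity
    have he : (0:ℝ) < Real.exp 1 := Real.exp_pos 1
    calc ((m+1:ℕ):ℝ)^(m+1) = ((m:ℝ)+1)^m * ((m:ℝ)+1) := by push_cast; rw [← h1]
      _ ≤ (Real.exp 1 * (m:ℝ)^m) * ((m:ℝ)+1) := mul_le_mul_of_nonneg_right h2 h3
      _ ≤ (Real.exp 1 * (Real.exp 1 ^ m * (m.factorial : ℝ))) * ((m:ℝ)+1) := by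
          have := mul_le_mul_of_nonneg_left ih (le_of_lt he)
          exact mul_le_mul_of_nonneg_right this h3
      _ = Real.exp 1 ^ (m+1) * (((m:ℝ)+1) * (m.factorial : ℝ)) := by ring
      _ = Real.exp 1 ^ (m+1) * ((m+1).factorial : ℝ) := by
          rw [Nat.factorial_succ]; push_cast; ring

lemma choose_bound {k Δ : ℕ} (hk : 1 ≤ k) (hΔ : 1 ≤ Δ) :
    (((k*Δ).choose (k-1) : ℕ) : ℝ) ≤ (Real.exp 1 * Δ)^k := by
  have hfac : (0:ℝ) < ((k-1).factorial : ℝ) := by exact_mod_cast (k-1).factorial_pos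
  have h0 : (((k*Δ).choose (k-1) : ℕ) : ℝ) ≤ ((k*Δ : ℕ):ℝ)^(k-1) / ((k-1).factorial : ℝ) :=
    Nat.choose_le_pow_div (k-1) (k*Δ)
  refine h0.trans ?_
  rw [div_le_iff₀ hfac]
  have hkpos : (0:ℝ) < k := by exact_mod_cast hk
  have hkey : (k:ℝ)^(k-1) ≤ Real.exp 1 ^ k * ((k-1).factorial : ℝ) := by
    have h1 : (k:ℝ)^k ≤ Real.exp 1 ^ k * (k.factorial : ℝ) := pow_le_exp_factorial k
    have h2 : (k:ℝ)^k = (k:ℝ)^(k-1) * k := by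
      conv_lhs => rw [show k = (k-1)+1 by omega]
      rw [pow_succ]
      norm_num [show (k-1)+1 = k from by omega]
    have h3 : (k.factorial : ℝ) = (k:ℝ) * ((k-1).factorial : ℝ) := by
      conv_lhs => rw [show k = (k-1)+1 by omega]
      rw [Nat.factorial_succ]
      push_cast
      congr 1
      exact_mod_cast (show (k-1)+1 = k from by omega)
    rw [h2, h3] at h1
    have h4 : (k:ℝ)^(k-1) * k ≤ (Real.exp 1 ^ k * ((k-1).factorial : ℝ)) * k := by linarith
    exact (mul_le_mul_iff_of_pos_right hkpos).1 h4
  have hΔ1 : (1:ℝ) ≤ (Δ:ℝ) := by exact_mod_cast hΔ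
  calc ((k*Δ : ℕ):ℝ)^(k-1) = (k:ℝ)^(k-1) * (Δ:ℝ)^(k-1) := by push_cast; rw [mul_pow]
    _ ≤ (Real.exp 1 ^ k * ((k-1).factorial : ℝ)) * (Δ:ℝ)^(k-1) :=
        mul_le_mul_of_nonneg_right hkey (by positivity)
    _ ≤ (Real.exp 1 ^ k * ((k-1).factorial : ℝ)) * (Δ:ℝ)^k := by
        refine mul_le_mul_of_nonneg_left ?_ (by positivity)
        exact pow_le_pow_right₀ hΔ1 (by omega)
    _ = (Real.exp 1 * Δ)^k * ((k-1).factorial : ℝ) := by rw [mul_pow]; ring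

end Numeric

open Classical in
theorem card_connected_subsets_le {V : Type*} [Fintype V] [DecidableEq V]
    (G : SimpleGraph V) [DecidableRel G.Adj] (Δ k : ℕ) (hΔ : 2 ≤ Δ)
    (hdeg : ∀ v, G.degree v ≤ Δ) (v : V) (hk : 1 ≤ k) :
    (Nat.card {s : Finset V // v ∈ s ∧ s.card = k ∧
        (SimpleGraph.induce (↑s : Set V) G).Connected} : ℝ) ≤
      (Real.exp 1 * Δ) ^ k := by
  classical
  letI : LinearOrder V :=
    LinearOrder.lift' (fun x => Fintype.equivFin V x) (Fintype.equivFin V).injective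
  have hk0 : 0 < k := hk
  have hΔ0 : 0 < Δ := by omega
  let F : {s : Finset V // v ∈ s ∧ s.card = k ∧
      (SimpleGraph.induce (↑s : Set V) G).Connected} →
      {c : Finset (Fin k × Fin Δ) // c.card = k - 1} := fun s =>
    ⟨ConnSubAux.code G s.1 v k Δ hk0 hΔ0,
     ConnSubAux.code_card s.2.1 s.2.2.1 s.2.2.2 hk0 hΔ0 hdeg⟩
  have hinj : Function.Injective F := by
    rintro ⟨s, hs⟩ ⟨t, ht⟩ he
    have hcode : ConnSubAux.code G s v k Δ hk0 hΔ0 = ConnSubAux.code G t v k Δ hk0 hΔ0 :=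
      Subtype.ext_iff.1 he
    have hlf : ∀ p, p < k → ConnSubAux.lfun G s v p = ConnSubAux.lfun G t v p := by
      intro p
      induction p using Nat.strong_induction_on with
      | _ p ih =>
        intro hpk
        cases p with
        | zero => rfl
        | succ i =>
          obtain ⟨h1, e1⟩ := ConnSubAux.lfun_succ_eq hs.1 hs.2.1 hs.2.2
            (show i+2 ≤ k by omega) hk0 hΔ0 hdeg
          obtain ⟨h2, e2⟩ := ConnSubAux.lfun_succ_eq ht.1 ht.2.1 ht.2.2
            (show i+2 ≤ k by omega) hk0 hΔ0 hdeg
          have hC : ConnSubAux.cand G k Δ (ConnSubAux.code G s v k Δ hk0 hΔ0)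
                (ConnSubAux.lfun G s v) i
              = ConnSubAux.cand G k Δ (ConnSubAux.code G t v k Δ hk0 hΔ0)
                (ConnSubAux.lfun G t v) i := by
            rw [hcode]
            exact ConnSubAux.cand_congr (fun j hj => ih j (by omega) (by omega))
          rw [e1, e2]
          exact ConnSubAux.min'_congr hC h1 h2
    apply Subtype.ext
    show s = t
    have h1 : s = ConnSubAux.Pset G s v (k-1) :=
      (ConnSubAux.Pset_eq_S hs.1 hs.2.1 hs.2.2 hk).symm
    have h2 : t = ConnSubAux.Pset G t v (k-1) :=
      (ConnSubAux.Pset_eq_S ht.1 ht.2.1 ht.2.2 hk).symm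
    rw [h1, h2, ConnSubAux.Pset_eq_image, ConnSubAux.Pset_eq_image]
    exact Finset.image_congr (fun j hj => hlf j (by
      rw [Finset.coe_range, Set.mem_Iio] at hj; omega))
  have hcard1 : Nat.card {s : Finset V // v ∈ s ∧ s.card = k ∧
        (SimpleGraph.induce (↑s : Set V) G).Connected}
      ≤ Nat.card {c : Finset (Fin k × Fin Δ) // c.card = k - 1} :=
    Nat.card_le_card_of_injective F hinj
  have hcard2 : Nat.card {c : Finset (Fin k × Fin Δ) // c.card = k - 1}
      = (k*Δ).choose (k-1) := by
    rw [Nat.card_eq_fintype_card, Fintype.card_finset_len]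
    congr 1
    simp
  have hfinal := choose_bound hk (show 1 ≤ Δ by omega)
  have : (Nat.card {s : Finset V // v ∈ s ∧ s.card = k ∧
      (SimpleGraph.induce (↑s : Set V) G).Connected} : ℝ) ≤ (((k*Δ).choose (k-1) : ℕ) : ℝ) := by
    exact_mod_cast hcard2 ▸ hcard1
  exact this.trans hfinal
end

section
/- For any finite graph G of maximum degree at most 2d, the random cluster partition function with parameters p and q can be written as Z^RC_G(p,q) = (1−p)^{|E(G)|} q^{|V(G)|} · Ξ(G), where Ξ(G) is the polymer partition function over collections of vertex-disjoint connected subgraphs with at least two vertices, each polymer γ having weight (p/(1−p))^{|E(γ)|} q^{1−|V(γ)|}. -/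
attribute [local instance] Classical.propDecidable
set_option linter.unusedSectionVars false

/-- A polymer of the high-temperature expansion: a connected subgraph of `G` with at
least two vertices, given by its vertex set and a subset of the edges of `G` inside it. -/
def IsPolymer {V : Type*} (G : SimpleGraph V) (γ : Finset V × Finset (Sym2 V)) : Prop :=
  (↑γ.2 : Set (Sym2 V)) ⊆ G.edgeSet ∧ (∀ e ∈ γ.2, ∀ v ∈ e, v ∈ γ.1) ∧
    2 ≤ γ.1.card ∧
    (SimpleGraph.induce (↑γ.1 : Set V) (SimpleGraph.fromEdgeSet (↑γ.2 : Set (Sym2 V)))).Connected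

namespace RCaux

open SimpleGraph Finset

lemma zpow_sum_aux {α : Type*} {s : Finset α} (q : ℝ) (hq : q ≠ 0) (f : α → ℤ) :
    ∏ a ∈ s, q ^ f a = q ^ (∑ a ∈ s, f a) := by
  classical
  induction s using Finset.cons_induction with
  | empty => simp
  | cons a s ha ih => rw [Finset.prod_cons, Finset.sum_cons, ih, ← zpow_add₀ hq]

lemma connected_induce_supp {V : Type*} (H : SimpleGraph V) (c : H.ConnectedComponent) :
    (H.induce c.supp).Connected := by
  classical
  obtain ⟨v, rfl⟩ := Quot.exists_rep c
  have hv : v ∈ (H.connectedComponentMk v).supp := by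
    rw [ConnectedComponent.mem_supp_iff]
  rw [SimpleGraph.connected_iff]
  refine ⟨?_, ⟨⟨v, hv⟩⟩⟩
  rintro ⟨x, hx⟩ ⟨y, hy⟩
  change x ∈ (H.connectedComponentMk v).supp at hx
  change y ∈ (H.connectedComponentMk v).supp at hy
  rw [ConnectedComponent.mem_supp_iff] at hx hy
  have hr : H.Reachable x y := ConnectedComponent.eq.mp (hx.trans hy.symm)
  obtain ⟨w⟩ := hr
  have hsub : {z | z ∈ w.support} ⊆ (H.connectedComponentMk v).supp := by
    intro z hz
    have hzx : H.Reachable x z := ⟨w.takeUntil z hz⟩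
    rw [ConnectedComponent.mem_supp_iff]
    exact (ConnectedComponent.eq.mpr hzx.symm).trans hx
  have hconn := w.connected_induce_support
  have hreach := hconn ⟨x, by simp⟩ ⟨y, by simp [SimpleGraph.Walk.end_mem_support]⟩
  exact hreach.map (H.induceHomOfLE hsub).toHom

lemma walk_support_subset {V : Type*} {H : SimpleGraph V} {S : Set V}
    (hcl : ∀ x y, x ∈ S → H.Adj x y → y ∈ S) {u v : V} (w : H.Walk u v) (hu : u ∈ S) :
    ∀ x ∈ w.support, x ∈ S := by
  induction w with
  | nil =>
    intro x hx
    rw [SimpleGraph.Walk.support_nil, List.mem_singleton] at hx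
    exact hx ▸ hu
  | @cons a b c hadj p ih =>
    intro x hx
    rw [SimpleGraph.Walk.support_cons, List.mem_cons] at hx
    rcases hx with rfl | hx
    · exact hu
    · exact ih (hcl a b hu hadj) x hx

variable {V : Type*} [Fintype V] [DecidableEq V]

/-- The graph given by an edge set. -/
abbrev HA (A : Finset (Sym2 V)) : SimpleGraph V :=
  SimpleGraph.fromEdgeSet (↑A : Set (Sym2 V))

/-- Vertex set of a connected component, as a finset. -/
noncomputable def csupp (A : Finset (Sym2 V)) (c : (HA A).ConnectedComponent) : Finset V :=
  Finset.univ.filter (fun v => (HA A).connectedComponentMk v = c)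

/-- Edges of `A` inside a component. -/
noncomputable def cedges (A : Finset (Sym2 V)) (c : (HA A).ConnectedComponent) :
    Finset (Sym2 V) :=
  A.filter (fun e => ∀ v ∈ e, v ∈ csupp A c)

lemma mem_csupp {A : Finset (Sym2 V)} {c : (HA A).ConnectedComponent} {v : V} :
    v ∈ csupp A c ↔ (HA A).connectedComponentMk v = c := by
  simp [csupp]

lemma coe_csupp (A : Finset (Sym2 V)) (c : (HA A).ConnectedComponent) :
    (↑(csupp A c) : Set V) = c.supp := by
  ext v
  simp [mem_csupp, ConnectedComponent.mem_supp_iff]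

lemma csupp_nonempty (A : Finset (Sym2 V)) (c : (HA A).ConnectedComponent) :
    (csupp A c).Nonempty := by
  obtain ⟨v, rfl⟩ := Quot.exists_rep c
  exact ⟨v, mem_csupp.mpr rfl⟩

lemma mem_cedges {A : Finset (Sym2 V)} {c : (HA A).ConnectedComponent} {e : Sym2 V} :
    e ∈ cedges A c ↔ e ∈ A ∧ ∀ v ∈ e, v ∈ csupp A c := by
  simp [cedges]

/-- The set of big components. -/
noncomputable def bigComps (A : Finset (Sym2 V)) : Finset ((HA A).ConnectedComponent) :=
  Finset.univ.filter (fun c => 2 ≤ (csupp A c).card)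

section withG

variable (G : SimpleGraph V) [DecidableRel G.Adj]

/-- Polymer type. -/
abbrev P := {γ : Finset V × Finset (Sym2 V) // IsPolymer G γ}

/-- Collection of polymers obtained from an edge set. -/
noncomputable def ΓofA (A : Finset (Sym2 V)) : Finset (P G) :=
  Finset.univ.filter
    (fun γ => ∃ c, 2 ≤ (csupp A c).card ∧ γ.val = (csupp A c, cedges A c))

/-- Edge set obtained from a collection of polymers. -/
noncomputable def AofΓ (Γ : Finset (P G)) : Finset (Sym2 V) :=
  Γ.biUnion (fun γ => γ.val.2)

end withG

variable {G : SimpleGraph V} [DecidableRel G.Adj]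

lemma adj_HA {A : Finset (Sym2 V)} (hA : A ⊆ G.edgeFinset) {a b : V}
    (hab : s(a, b) ∈ A) : (HA A).Adj a b := by
  rw [SimpleGraph.fromEdgeSet_adj]
  refine ⟨hab, ?_⟩
  have := SimpleGraph.not_isDiag_of_mem_edgeSet G (SimpleGraph.mem_edgeFinset.mp (hA hab))
  simpa using this

lemma edge_mem_cedges {A : Finset (Sym2 V)} (hA : A ⊆ G.edgeFinset) {a b : V}
    (hab : s(a, b) ∈ A) :
    s(a, b) ∈ cedges A ((HA A).connectedComponentMk a) := by
  have hadj := adj_HA hA hab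
  rw [mem_cedges]
  refine ⟨hab, ?_⟩
  intro v hv
  rw [Sym2.mem_iff] at hv
  rcases hv with rfl | rfl
  · exact mem_csupp.mpr rfl
  · exact mem_csupp.mpr (ConnectedComponent.connectedComponentMk_eq_of_adj hadj.symm)

lemma isPolymer_comp {A : Finset (Sym2 V)} (hA : A ⊆ G.edgeFinset)
    {c : (HA A).ConnectedComponent} (hc : 2 ≤ (csupp A c).card) :
    IsPolymer G (csupp A c, cedges A c) := by
  refine ⟨?_, ?_, hc, ?_⟩
  · intro e he
    simp only [Finset.coe_sort_coe, Finset.mem_coe] at he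
    exact SimpleGraph.mem_edgeFinset.mp (hA (mem_cedges.mp he).1)
  · exact fun e he => (mem_cedges.mp he).2
  · have hset : (↑(csupp A c) : Set V) = c.supp := coe_csupp A c
    rw [hset]
    have hgr : SimpleGraph.induce c.supp
          (SimpleGraph.fromEdgeSet (↑(cedges A c) : Set (Sym2 V)))
        = SimpleGraph.induce c.supp (HA A) := by
      ext ⟨x, hx⟩ ⟨y, hy⟩
      simp only [comap_adj, Function.Embedding.coe_subtype, SimpleGraph.fromEdgeSet_adj,
        Finset.mem_coe]
      constructor
      · rintro ⟨he, hne⟩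
        exact ⟨(mem_cedges.mp he).1, hne⟩
      · rintro ⟨he, hne⟩
        refine ⟨mem_cedges.mpr ⟨he, ?_⟩, hne⟩
        intro v hv
        rw [Sym2.mem_iff] at hv
        rcases hv with rfl | rfl
        · rw [mem_csupp]; rwa [ConnectedComponent.mem_supp_iff] at hx
        · rw [mem_csupp]; rwa [ConnectedComponent.mem_supp_iff] at hy
    rw [hgr]
    exact connected_induce_supp (HA A) c

lemma mem_ΓofA {A : Finset (Sym2 V)} {γ : P G} :
    γ ∈ ΓofA G A ↔ ∃ c, 2 ≤ (csupp A c).card ∧ γ.val = (csupp A c, cedges A c) := by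
  simp [ΓofA]

lemma csupp_injective {A : Finset (Sym2 V)} {c c' : (HA A).ConnectedComponent}
    (h : csupp A c = csupp A c') : c = c' := by
  obtain ⟨v, hv⟩ := csupp_nonempty A c
  have hv' : v ∈ csupp A c' := h ▸ hv
  rw [mem_csupp] at hv hv'
  exact hv ▸ hv'

lemma AofΓ_ΓofA {A : Finset (Sym2 V)} (hA : A ⊆ G.edgeFinset) :
    AofΓ G (ΓofA G A) = A := by
  ext e
  simp only [AofΓ, Finset.mem_biUnion]
  constructor
  · rintro ⟨γ, hγ, he⟩
    obtain ⟨c, hc, hval⟩ := mem_ΓofA.mp hγ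
    rw [hval] at he
    exact (mem_cedges.mp he).1
  · intro he
    induction e with
    | _ a b =>
      have hadj := adj_HA hA he
      set c := (HA A).connectedComponentMk a with hc
      have hbig : 2 ≤ (csupp A c).card := by
        have ha' : a ∈ csupp A c := mem_csupp.mpr rfl
        have hb' : b ∈ csupp A c :=
          mem_csupp.mpr (ConnectedComponent.connectedComponentMk_eq_of_adj hadj.symm)
        have : ({a, b} : Finset V) ⊆ csupp A c := by
          intro x hx
          rcases Finset.mem_insert.mp hx with rfl | hx
          · exact ha'
          · exact (Finset.mem_singleton.mp hx) ▸ hb'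
        calc 2 = ({a, b} : Finset V).card := by
                rw [Finset.card_insert_of_notMem (by simpa using hadj.ne),
                  Finset.card_singleton]
             _ ≤ _ := Finset.card_le_card this
      refine ⟨⟨(csupp A c, cedges A c), isPolymer_comp hA hbig⟩, ?_, ?_⟩
      · exact mem_ΓofA.mpr ⟨c, hbig, rfl⟩
      · exact edge_mem_cedges hA he

lemma ΓofA_pairwise {A : Finset (Sym2 V)} :
    (↑(ΓofA G A) : Set (P G)).Pairwise fun γ γ' => Disjoint γ.val.1 γ'.val.1 := by
  intro γ hγ γ' hγ' hne
  rw [Finset.mem_coe, mem_ΓofA] at hγ hγ'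
  obtain ⟨c, hc, hval⟩ := hγ
  obtain ⟨c', hc', hval'⟩ := hγ'
  have hcc : c ≠ c' := by
    rintro rfl
    exact hne (Subtype.ext (hval.trans hval'.symm))
  rw [hval, hval']
  rw [Finset.disjoint_left]
  intro v hv hv'
  rw [mem_csupp] at hv hv'
  exact hcc (hv ▸ hv')


section backward

variable {Γ : Finset (P G)}

lemma AofΓ_subset : AofΓ G Γ ⊆ G.edgeFinset := by
  intro e he
  obtain ⟨γ, _, he⟩ := Finset.mem_biUnion.mp he
  exact SimpleGraph.mem_edgeFinset.mpr (γ.prop.1 he)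

lemma closure_aux (hΓ : (↑Γ : Set (P G)).Pairwise fun γ γ' => Disjoint γ.val.1 γ'.val.1)
    {γ : P G} (hγ : γ ∈ Γ) :
    ∀ x y, x ∈ (↑γ.val.1 : Set V) → (HA (AofΓ G Γ)).Adj x y → y ∈ (↑γ.val.1 : Set V) := by
  intro x y hx hadj
  rw [SimpleGraph.fromEdgeSet_adj] at hadj
  obtain ⟨γ', hγ', he⟩ := Finset.mem_biUnion.mp hadj.1
  have hx' : x ∈ γ'.val.1 := γ'.prop.2.1 _ he x (by simp)
  have hy' : y ∈ γ'.val.1 := γ'.prop.2.1 _ he y (by simp)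
  have : γ = γ' := by
    by_contra hne
    exact Finset.disjoint_left.mp (hΓ (Finset.mem_coe.mpr hγ) (Finset.mem_coe.mpr hγ') hne)
      hx hx'
  rw [Finset.mem_coe, this]
  exact hy'

lemma reach_of_polymer {γ : P G} (hγ : γ ∈ Γ) {u v : V}
    (hu : u ∈ γ.val.1) (hv : v ∈ γ.val.1) : (HA (AofΓ G Γ)).Reachable u v := by
  have key : ∀ {a b : (↑γ.val.1 : Set V)},
      (SimpleGraph.induce (↑γ.val.1 : Set V)
        (SimpleGraph.fromEdgeSet (↑γ.val.2 : Set (Sym2 V)))).Adj a b →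
      (HA (AofΓ G Γ)).Adj a.val b.val := by
    intro a b hab
    simp only [comap_adj, Function.Embedding.coe_subtype, SimpleGraph.fromEdgeSet_adj,
      Finset.mem_coe] at hab
    rw [SimpleGraph.fromEdgeSet_adj]
    exact ⟨Finset.mem_coe.mpr (Finset.mem_biUnion.mpr ⟨γ, hγ, hab.1⟩), hab.2⟩
  have hreach := γ.prop.2.2.2.preconnected ⟨u, Finset.mem_coe.mpr hu⟩ ⟨v, Finset.mem_coe.mpr hv⟩
  exact hreach.map ⟨Subtype.val, key⟩

lemma csupp_AofΓ (hΓ : (↑Γ : Set (P G)).Pairwise fun γ γ' => Disjoint γ.val.1 γ'.val.1)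
    {γ : P G} (hγ : γ ∈ Γ) {v : V} (hv : v ∈ γ.val.1) :
    csupp (AofΓ G Γ) ((HA (AofΓ G Γ)).connectedComponentMk v) = γ.val.1 := by
  ext u
  rw [mem_csupp]
  constructor
  · intro h
    have hr : (HA (AofΓ G Γ)).Reachable v u := (ConnectedComponent.eq.mp h).symm
    obtain ⟨w⟩ := hr
    have := walk_support_subset (closure_aux hΓ hγ) w (Finset.mem_coe.mpr hv) u
      (SimpleGraph.Walk.end_mem_support w)
    exact Finset.mem_coe.mp this
  · intro hu
    exact ConnectedComponent.eq.mpr (reach_of_polymer hγ hu hv)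

lemma cedges_AofΓ (hΓ : (↑Γ : Set (P G)).Pairwise fun γ γ' => Disjoint γ.val.1 γ'.val.1)
    {γ : P G} (hγ : γ ∈ Γ) {v : V} (hv : v ∈ γ.val.1) :
    cedges (AofΓ G Γ) ((HA (AofΓ G Γ)).connectedComponentMk v) = γ.val.2 := by
  ext e
  rw [mem_cedges, csupp_AofΓ hΓ hγ hv]
  constructor
  · rintro ⟨heA, hev⟩
    obtain ⟨γ', hγ', he⟩ := Finset.mem_biUnion.mp heA
    have ha : e.out.1 ∈ γ'.val.1 := γ'.prop.2.1 _ he _ (Sym2.out_fst_mem e)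
    have ha' : e.out.1 ∈ γ.val.1 := hev _ (Sym2.out_fst_mem e)
    have : γ = γ' := by
      by_contra hne
      exact Finset.disjoint_left.mp (hΓ (Finset.mem_coe.mpr hγ) (Finset.mem_coe.mpr hγ') hne)
        ha' ha
    rw [this]; exact he
  · intro he
    exact ⟨Finset.mem_biUnion.mpr ⟨γ, hγ, he⟩, fun x hx => γ.prop.2.1 _ he x hx⟩

lemma ΓofA_AofΓ (hΓ : (↑Γ : Set (P G)).Pairwise fun γ γ' => Disjoint γ.val.1 γ'.val.1) :
    ΓofA G (AofΓ G Γ) = Γ := by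
  ext γ
  rw [mem_ΓofA]
  constructor
  · rintro ⟨c, hc, hval⟩
    obtain ⟨a, ha, b, hb, hab⟩ := Finset.one_lt_card.mp (by omega : 1 < (csupp (AofΓ G Γ) c).card)
    have hca : (HA (AofΓ G Γ)).connectedComponentMk a = c := mem_csupp.mp ha
    have hr : (HA (AofΓ G Γ)).Reachable a b :=
      ConnectedComponent.eq.mp (hca.trans (mem_csupp.mp hb).symm)
    obtain ⟨w⟩ := hr
    -- extract a first edge from the walk
    have hedge : ∃ y, (HA (AofΓ G Γ)).Adj a y := by
      cases w with
      | nil => exact absurd rfl hab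
      | cons h p => exact ⟨_, h⟩
    obtain ⟨y, hay⟩ := hedge
    rw [SimpleGraph.fromEdgeSet_adj] at hay
    obtain ⟨γ', hγ', he⟩ := Finset.mem_biUnion.mp hay.1
    have haγ' : a ∈ γ'.val.1 := γ'.prop.2.1 _ he a (by simp)
    have h1 : csupp (AofΓ G Γ) c = γ'.val.1 := by
      rw [← hca]; exact csupp_AofΓ hΓ hγ' haγ'
    have h2 : cedges (AofΓ G Γ) c = γ'.val.2 := by
      rw [← hca]; exact cedges_AofΓ hΓ hγ' haγ'
    have : γ = γ' := Subtype.ext (by rw [hval, h1, h2])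
    rw [this]; exact hγ'
  · intro hγ
    have hne : γ.val.1.Nonempty := Finset.card_pos.mp (by have := γ.prop.2.2.1; omega)
    obtain ⟨v, hv⟩ := hne
    refine ⟨(HA (AofΓ G Γ)).connectedComponentMk v, ?_, ?_⟩
    · rw [csupp_AofΓ hΓ hγ hv]; exact γ.prop.2.2.1
    · rw [csupp_AofΓ hΓ hγ hv, cedges_AofΓ hΓ hγ hv]

lemma card_AofΓ (hΓ : (↑Γ : Set (P G)).Pairwise fun γ γ' => Disjoint γ.val.1 γ'.val.1) :
    (AofΓ G Γ).card = ∑ γ ∈ Γ, γ.val.2.card := by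
  apply Finset.card_biUnion
  intro γ hγ γ' hγ' hne
  show Disjoint γ.val.2 γ'.val.2
  rw [Finset.disjoint_left]
  intro e he he'
  have h1 := γ.prop.2.1 _ he _ (Sym2.out_fst_mem e)
  have h2 := γ'.prop.2.1 _ he' _ (Sym2.out_fst_mem e)
  exact Finset.disjoint_left.mp (hΓ (Finset.mem_coe.mpr hγ) (Finset.mem_coe.mpr hγ') hne) h1 h2

end backward

lemma sum_card_ΓofA {A : Finset (Sym2 V)} (hA : A ⊆ G.edgeFinset) :
    ∑ γ ∈ ΓofA G A, γ.val.2.card = A.card := by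
  conv_rhs => rw [← AofΓ_ΓofA hA]
  exact (card_AofΓ ΓofA_pairwise).symm

lemma sum_ΓofA {M : Type*} [AddCommMonoid M] {A : Finset (Sym2 V)} (hA : A ⊆ G.edgeFinset)
    (f : Finset V × Finset (Sym2 V) → M) :
    ∑ c ∈ bigComps A, f (csupp A c, cedges A c) = ∑ γ ∈ ΓofA G A, f γ.val := by
  refine Finset.sum_bij (fun c hc => (⟨(csupp A c, cedges A c),
      isPolymer_comp hA (Finset.mem_filter.mp hc).2⟩ : P G)) ?_ ?_ ?_ ?_
  · intro c hc; exact mem_ΓofA.mpr ⟨c, (Finset.mem_filter.mp hc).2, rfl⟩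
  · intro c1 h1 c2 h2 heq
    exact csupp_injective (congrArg (fun γ : P G => γ.val.1) heq)
  · intro γ hγ
    obtain ⟨c, hc, hval⟩ := mem_ΓofA.mp hγ
    exact ⟨c, Finset.mem_filter.mpr ⟨Finset.mem_univ _, hc⟩, Subtype.ext hval.symm⟩
  · intro c hc; rfl

lemma comp_count (A : Finset (Sym2 V)) :
    (Fintype.card V : ℤ) + ∑ c ∈ bigComps A, ((1 : ℤ) - ((csupp A c).card : ℤ)) =
      Nat.card ((HA A).ConnectedComponent) := by
  have hV : Fintype.card V = ∑ c : (HA A).ConnectedComponent, (csupp A c).card := by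
    rw [← Finset.card_univ,
      Finset.card_eq_sum_card_fiberwise (f := (HA A).connectedComponentMk)
        (t := Finset.univ) (fun x _ => Finset.mem_univ _)]
    rfl
  have hN : (Nat.card ((HA A).ConnectedComponent) : ℤ) =
      ∑ _c : (HA A).ConnectedComponent, (1 : ℤ) := by
    rw [Nat.card_eq_fintype_card]
    simp
  rw [hN, hV]
  push_cast
  rw [bigComps, Finset.sum_filter, ← Finset.sum_add_distrib]
  apply Finset.sum_congr rfl
  intro c _
  by_cases h : 2 ≤ (csupp A c).card
  · rw [if_pos h]; ring
  · rw [if_neg h]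
    have h1 : 1 ≤ (csupp A c).card := Finset.card_pos.mpr (csupp_nonempty A c)
    have h2 : (csupp A c).card = 1 := by omega
    simp [h2]

lemma sum_zexp_ΓofA {A : Finset (Sym2 V)} (hA : A ⊆ G.edgeFinset) :
    (Fintype.card V : ℤ) + ∑ γ ∈ ΓofA G A, ((1 : ℤ) - (γ.val.1.card : ℤ)) =
      Nat.card ((HA A).ConnectedComponent) := by
  rw [← sum_ΓofA hA (fun x => ((1 : ℤ) - (x.1.card : ℤ)))]
  exact comp_count A

lemma weight_eq {A : Finset (Sym2 V)} (hA : A ⊆ G.edgeFinset) {p q : ℝ}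
    (hp1 : p < 1) (hq : 0 < q) :
    p ^ A.card * (1 - p) ^ (G.edgeFinset.card - A.card) *
        q ^ Nat.card ((HA A).ConnectedComponent) =
      (1 - p) ^ G.edgeFinset.card * q ^ Fintype.card V *
        ∏ γ ∈ ΓofA G A, ((p / (1 - p)) ^ γ.val.2.card * q ^ ((1 : ℤ) - (γ.val.1.card : ℤ))) := by
  have ht0 : (1 : ℝ) - p ≠ 0 := by linarith
  have hq0 : q ≠ 0 := ne_of_gt hq
  have hcard : A.card ≤ G.edgeFinset.card := Finset.card_le_card hA
  rw [Finset.prod_mul_distrib, Finset.prod_pow_eq_pow_sum, sum_card_ΓofA hA,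
    zpow_sum_aux q hq0]
  have hk : q ^ (Nat.card ((HA A).ConnectedComponent)) =
      q ^ Fintype.card V * q ^ (∑ γ ∈ ΓofA G A, ((1 : ℤ) - (γ.val.1.card : ℤ))) := by
    rw [← zpow_natCast q (Nat.card ((HA A).ConnectedComponent)),
      show ((Nat.card ((HA A).ConnectedComponent) : ℤ)) =
        (Fintype.card V : ℤ) + ∑ γ ∈ ΓofA G A, ((1 : ℤ) - (γ.val.1.card : ℤ)) from
        (sum_zexp_ΓofA hA).symm,
      zpow_add₀ hq0, zpow_natCast]
  rw [hk, pow_sub₀ _ ht0 hcard, div_pow, div_eq_mul_inv]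
  generalize q ^ (∑ γ ∈ ΓofA G A, ((1 : ℤ) - (γ.val.1.card : ℤ))) = Q
  ring

lemma sum_set_coe {X M : Type*} [Fintype X] [AddCommMonoid M] [∀ P, Decidable P]
    (pred : Set X → Prop) (F : Set X → M) :
    ∑ S ∈ Finset.filter pred
        (do let a ← (Finset.univ : Finset (Finset X)); pure (↑a : Set X)), F S =
      ∑ a ∈ Finset.filter (fun a : Finset X => pred ↑a) Finset.univ, F ↑a := by
  rw [bind_pure_comp, Finset.fmap_def, Finset.filter_image]
  exact Finset.sum_image (fun a _ b _ h => Finset.coe_injective h)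

end RCaux


set_option maxHeartbeats 1000000 in
theorem random_cluster_eq_polymer_partition_function {V : Type*} [Fintype V] [DecidableEq V]
    (G : SimpleGraph V) [DecidableRel G.Adj] (d : ℕ) (hdeg : ∀ v, G.degree v ≤ 2 * d)
    (p q : ℝ) (hp0 : 0 ≤ p) (hp1 : p < 1) (hq : 0 < q) :
    (∑ A ∈ G.edgeFinset.powerset,
        p ^ A.card * (1 - p) ^ (G.edgeFinset.card - A.card) *
          q ^ Nat.card (SimpleGraph.fromEdgeSet (↑A : Set (Sym2 V))).ConnectedComponent) =
      (1 - p) ^ G.edgeFinset.card * q ^ Fintype.card V *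
        ∑ Γ ∈ (Finset.univ :
            Finset (Finset {γ : Finset V × Finset (Sym2 V) // IsPolymer G γ})).filter
            (fun Γ => (↑Γ : Set {γ : Finset V × Finset (Sym2 V) // IsPolymer G γ}).Pairwise
              fun γ γ' => Disjoint γ.val.1 γ'.val.1),
          ∏ γ ∈ Γ, (p / (1 - p)) ^ γ.val.2.card * q ^ ((1 : ℤ) - γ.val.1.card) := by
  classical
  rw [Finset.mul_sum, RCaux.sum_set_coe]
  simp only [Finset.toFinset_coe, Finset.filter_congr_decidable]
  refine Finset.sum_nbij' (i := RCaux.ΓofA G) (j := RCaux.AofΓ G) ?_ ?_ ?_ ?_ ?_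
  · intro A hA
    simp only [Finset.mem_filter]
    exact ⟨Finset.mem_univ _, RCaux.ΓofA_pairwise⟩
  · intro Γ hΓ
    exact Finset.mem_powerset.mpr RCaux.AofΓ_subset
  · intro A hA
    exact RCaux.AofΓ_ΓofA (Finset.mem_powerset.mp hA)
  · intro Γ hΓ
    simp only [Finset.mem_filter] at hΓ
    exact RCaux.ΓofA_AofΓ hΓ.2
  · intro A hA
    exact RCaux.weight_eq (Finset.mem_powerset.mp hA) hp1 hq
end

section
/- Let d ≥ 2, β ≤ (3 log q)/(4d), and suppose k > 5d and q ≥ C^{−20d} for some 0 < C < 1. If a connected subgraph γ of a graph of maximum degree 2d has k edges, then its polymer weight w_γ = (e^β − 1)^k q^{1−|V(γ)|} satisfies w_γ ≤ C^k. -/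
theorem polymer_weight_bound_large {V : Type*} [Fintype V] [DecidableEq V]
    (G : SimpleGraph V) [DecidableRel G.Adj] (d : ℕ) (hd : 2 ≤ d)
    (hdeg : ∀ v, G.degree v ≤ 2 * d)
    (s : Finset V) (B : Finset (Sym2 V)) (hB : ↑B ⊆ G.edgeSet)
    (hBs : ∀ e ∈ B, ∀ v ∈ e, v ∈ s)
    (hconn : (SimpleGraph.induce (↑s : Set V)
      (SimpleGraph.fromEdgeSet (↑B : Set (Sym2 V)))).Connected)
    (β q C : ℝ) (hβ0 : 0 ≤ β) (hq1 : 1 ≤ q)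
    (hβ : β ≤ 3 * Real.log q / (4 * d))
    (hC0 : 0 < C) (hC1 : C < 1)
    (k : ℕ) (hk : k = B.card) (hk5d : 5 * d < k)
    (hqC : C ^ (-(20 * d : ℤ)) ≤ q) :
    (Real.exp β - 1) ^ k * q ^ ((1 : ℤ) - (s.card : ℤ)) ≤ C ^ k := by
  have hd0 : 0 < d := by omega
  have hdR : (0:ℝ) < d := by exact_mod_cast hd0
  have hq0 : (0:ℝ) < q := lt_of_lt_of_le one_pos hq1
  -- counting: k ≤ s.card * d
  have hcount : k ≤ s.card * d := by
    have h2 : 2 * k = ∑ v ∈ s, (B.filter (fun e => v ∈ e)).card := by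
      have h1 : ∀ e ∈ B, (s.filter (fun v => v ∈ e)).card = 2 := by
        intro e he
        induction e with
        | h x y =>
          have hadj : G.Adj x y := by
            have := hB he
            rwa [SimpleGraph.mem_edgeSet] at this
          have hxy : x ≠ y := hadj.ne
          have : s.filter (fun v => v ∈ s(x, y)) = {x, y} := by
            ext v
            simp only [Finset.mem_filter, Sym2.mem_iff, Finset.mem_insert,
              Finset.mem_singleton]
            constructor
            · rintro ⟨-, h⟩; exact h
            · rintro (rfl | rfl)
              · exact ⟨hBs _ he _ (Sym2.mem_mk_left _ _), Or.inl rfl⟩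
              · exact ⟨hBs _ he _ (Sym2.mem_mk_right _ _), Or.inr rfl⟩
          rw [this, Finset.card_insert_of_notMem (by simpa using hxy),
            Finset.card_singleton]
      calc 2 * k = ∑ e ∈ B, (s.filter (fun v => v ∈ e)).card := by
            rw [Finset.sum_congr rfl h1, Finset.sum_const, smul_eq_mul, hk, mul_comm]
        _ = ∑ e ∈ B, ∑ v ∈ s, (if v ∈ e then 1 else 0) :=
            Finset.sum_congr rfl fun e _ => Finset.card_filter _ _
        _ = ∑ v ∈ s, ∑ e ∈ B, (if v ∈ e then 1 else 0) := Finset.sum_comm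
        _ = ∑ v ∈ s, (B.filter (fun e => v ∈ e)).card :=
            (Finset.sum_congr rfl fun v _ => (Finset.card_filter _ _).symm)
    have h3 : ∀ v ∈ s, (B.filter (fun e => v ∈ e)).card ≤ 2 * d := by
      intro v _
      refine le_trans ?_ (hdeg v)
      rw [← SimpleGraph.card_incidenceFinset_eq_degree]
      apply Finset.card_le_card
      intro e he
      rw [Finset.mem_filter] at he
      rw [SimpleGraph.mem_incidenceFinset]
      exact ⟨hB he.1, he.2⟩
    have : 2 * k ≤ s.card * (2 * d) := by
      rw [h2]
      calc ∑ v ∈ s, (B.filter (fun e => v ∈ e)).card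
          ≤ ∑ _v ∈ s, (2 * d) := Finset.sum_le_sum h3
        _ = s.card * (2 * d) := by rw [Finset.sum_const, smul_eq_mul]
    have h4 : s.card * (2 * d) = 2 * (s.card * d) := by ring
    omega
  have hcountR : (k:ℝ) ≤ s.card * d := by exact_mod_cast hcount
  have hkR : 5 * (d:ℝ) + 1 ≤ k := by exact_mod_cast hk5d
  -- step 1: exp β - 1 ≤ q ^ (3/(4d))
  have h1 : Real.exp β - 1 ≤ q ^ ((3:ℝ) / (4 * d)) := by
    have : Real.exp β ≤ q ^ ((3:ℝ) / (4 * d)) := by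
      rw [Real.rpow_def_of_pos hq0]
      apply Real.exp_le_exp.mpr
      calc β ≤ 3 * Real.log q / (4 * d) := hβ
        _ = Real.log q * (3 / (4 * d)) := by ring
    linarith
  have hA0 : 0 ≤ Real.exp β - 1 := by
    have := Real.one_le_exp hβ0; linarith
  -- step 2
  have h2 : (Real.exp β - 1) ^ k * q ^ ((1 : ℤ) - (s.card : ℤ))
      ≤ q ^ ((3:ℝ) * k / (4 * d) + (1 - s.card)) := by
    have hqz : (0:ℝ) ≤ q ^ ((1 : ℤ) - (s.card : ℤ)) := zpow_nonneg hq0.le _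
    calc (Real.exp β - 1) ^ k * q ^ ((1 : ℤ) - (s.card : ℤ))
        ≤ (q ^ ((3:ℝ) / (4 * d))) ^ k * q ^ ((1 : ℤ) - (s.card : ℤ)) := by
          apply mul_le_mul_of_nonneg_right (pow_le_pow_left₀ hA0 h1 k) hqz
      _ = q ^ ((3:ℝ) * k / (4 * d)) * q ^ ((1:ℝ) - s.card) := by
          rw [← Real.rpow_natCast (q ^ ((3:ℝ) / (4 * d))) k, ← Real.rpow_mul hq0.le,
            ← Real.rpow_intCast q ((1 : ℤ) - (s.card : ℤ))]
          push_cast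
          ring_nf
      _ = q ^ ((3:ℝ) * k / (4 * d) + (1 - s.card)) := by
          rw [← Real.rpow_add hq0]
  -- exponent bound
  have hexp : (3:ℝ) * k / (4 * d) + (1 - s.card) ≤ -((k:ℝ) / (20 * d)) := by
    have h4 : (4:ℝ) * k / (5 * d) ≤ s.card - 1 := by
      rw [div_le_iff₀ (by positivity)]
      nlinarith
    have he : (3:ℝ) * k / (4 * d) + (k:ℝ) / (20 * d) = 4 * k / (5 * d) := by
      field_simp; ring
    linarith
  have h3 : q ^ ((3:ℝ) * k / (4 * d) + (1 - s.card)) ≤ q ^ (-((k:ℝ) / (20 * d))) :=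
    Real.rpow_le_rpow_of_exponent_le hq1 hexp
  -- step 3: base comparison
  have hCq : (0:ℝ) < C ^ (-(20 * d : ℤ)) := zpow_pos hC0 _
  have h5 : q ^ (-((k:ℝ) / (20 * d))) ≤ (C ^ (-(20 * d : ℤ))) ^ (-((k:ℝ) / (20 * d))) :=
    Real.rpow_le_rpow_of_nonpos hCq hqC (neg_nonpos.mpr (by positivity))
  have h6 : (C ^ (-(20 * d : ℤ))) ^ (-((k:ℝ) / (20 * d))) = C ^ k := by
    rw [← Real.rpow_intCast C (-(20 * d : ℤ)), ← Real.rpow_mul hC0.le,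
      ← Real.rpow_natCast C k]
    congr 1
    push_cast
    field_simp
  calc (Real.exp β - 1) ^ k * q ^ ((1 : ℤ) - (s.card : ℤ))
      ≤ q ^ ((3:ℝ) * k / (4 * d) + (1 - s.card)) := h2
    _ ≤ q ^ (-((k:ℝ) / (20 * d))) := h3
    _ ≤ (C ^ (-(20 * d : ℤ))) ^ (-((k:ℝ) / (20 * d))) := h5
    _ = C ^ k := h6
end

section
/- Let ε ∈ (0, 1/N) and m = log(8/ε)/3. Suppose the cluster expansion tail bound ∑_{‖Γ‖=k} |φ(H_Γ)∏_{γ∈Γ} w_γ| ≤ N e^{−3k} holds for all k, and suppose for each polymer γ with ‖γ‖ ≤ m the approximate weight satisfies |log w̃_γ − log w_γ| ≤ ε‖γ‖². Then |T_m(w̃) − T_m(w)| ≤ Nε/8, where T_m is the cluster expansion truncated to clusters of total size less than m. -/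
attribute [local instance] Classical.propDecidable

/-- The Ursell function of a graph `H` on `n` vertices. -/
noncomputable def ursell (n : ℕ) (H : SimpleGraph (Fin n)) : ℝ :=
  (1 / (Nat.factorial n : ℝ)) *
    ∑ A : Finset (Sym2 (Fin n)),
      if (↑A : Set (Sym2 (Fin n))) ⊆ H.edgeSet ∧
          (SimpleGraph.fromEdgeSet (↑A : Set (Sym2 (Fin n)))).Connected
        then (-1 : ℝ) ^ A.card else 0

/-- The incompatibility graph of a tuple of polymers. -/
def incompatGraph {V P : Type*} [DecidableEq V] (vset : P → Finset V) (Γ : List P) :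
    SimpleGraph (Fin Γ.length) :=
  SimpleGraph.fromRel fun i j => ¬ Disjoint (vset (Γ.get i)) (vset (Γ.get j))

/-- A cluster is a nonempty tuple of polymers whose incompatibility graph is connected. -/
def IsCluster {V P : Type*} [DecidableEq V] (vset : P → Finset V) (Γ : List P) : Prop :=
  Γ ≠ [] ∧ (incompatGraph vset Γ).Connected

/-- The cluster expansion truncated to clusters of total size less than `m`. -/
noncomputable def truncatedClusterExpansion {V P : Type*} [DecidableEq V]
    (vset : P → Finset V) (size : P → ℕ) (w : P → ℝ) (m : ℝ) : ℝ :=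
  ∑' Γ : {Γ : List P // IsCluster vset Γ ∧ ((Γ.map size).sum : ℝ) < m},
    ursell Γ.val.length (incompatGraph vset Γ.val) * (Γ.val.map w).prod


lemma my_abs_list_sum (l : List ℝ) : |l.sum| ≤ (l.map abs).sum := by
  induction l with
  | nil => simp
  | cons a t ih =>
    simp only [List.sum_cons, List.map_cons]
    exact (abs_add_le _ _).trans (by linarith)

lemma my_sq_sum (l : List ℝ) (h : ∀ x ∈ l, 0 ≤ x) :
    (l.map (fun x => x ^ 2)).sum ≤ l.sum ^ 2 := by
  induction l with
  | nil => simp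
  | cons a t ih =>
    simp only [List.sum_cons, List.map_cons]
    have ha : 0 ≤ a := h a (by simp)
    have ht : 0 ≤ t.sum := List.sum_nonneg (fun x hx => h x (by simp [hx]))
    have := ih (fun x hx => h x (by simp [hx]))
    nlinarith

lemma my_four_k_sq (k : ℕ) (hk : 1 ≤ k) : 4 * k ^ 2 ≤ 4 ^ k := by
  induction k with
  | zero => omega
  | succ n ih =>
    rcases Nat.eq_zero_or_pos n with h | h
    · subst h; norm_num
    · have := ih h
      have h4 : 4 ^ (n+1) = 4 * 4 ^ n := by rw [pow_succ]; ring
      nlinarith [this, h4, Nat.one_le_iff_ne_zero.2 (by omega : n ≠ 0)]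

lemma my_geom_icc (B : ℕ) : ∑ k ∈ Finset.Icc 1 B, (1 / 5 : ℝ) ^ k ≤ 1 / 4 := by
  have key : ∀ B : ℕ, ∑ k ∈ Finset.Icc 1 B, (1 / 5 : ℝ) ^ k = (1 - (1 / 5) ^ B) / 4 := by
    intro B
    induction B with
    | zero => simp
    | succ n ih =>
      rw [Finset.sum_Icc_succ_top (by omega), ih]
      ring
  rw [key]
  have : (0:ℝ) ≤ (1/5:ℝ)^B := by positivity
  linarith

lemma my_finite_cluster {P : Type*} [Fintype P] (size : P → ℕ) (hsize : ∀ γ, 1 ≤ size γ)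
    (Q : List P → Prop) (n : ℕ) (hQ : ∀ Γ, Q Γ → (Γ.map size).sum ≤ n) :
    Finite {Γ : List P // Q Γ} := by
  have hsub : {Γ : List P | Q Γ} ⊆ {l : List P | l.length ≤ n} := by
    intro Γ hΓ
    have h1 : Γ.length ≤ (Γ.map size).sum := by
      have := List.length_le_sum_of_one_le (Γ.map size) (by
        intro i hi
        simp only [List.mem_map] at hi
        obtain ⟨γ, _, rfl⟩ := hi
        exact hsize γ)
      simpa using this
    exact le_trans h1 (hQ Γ hΓ)
  exact ((List.finite_length_le P n).subset hsub).to_subtype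

lemma my_eps_m_sq {ε : ℝ} (h0 : 0 < ε) (h1 : ε ≤ 1) :
    ε * (Real.log (8 / ε) / 3) ^ 2 ≤ 1 := by
  set u := Real.sqrt ε with hu
  have hu0 : 0 < u := Real.sqrt_pos.2 h0
  have hu1 : u ≤ 1 := by
    rw [hu, show (1:ℝ) = Real.sqrt 1 by simp]
    exact Real.sqrt_le_sqrt h1
  have huε : u * u = ε := Real.mul_self_sqrt h0.le
  have hL0 : 0 ≤ Real.log (8 / ε) := Real.log_nonneg (by
    rw [le_div_iff₀ h0]; linarith)
  have hlog_le : ∀ x : ℝ, 0 < x → Real.log x ≤ x / Real.exp 1 := by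
    intro x hx
    have h := Real.log_le_sub_one_of_pos (show 0 < x / Real.exp 1 by positivity)
    rw [Real.log_div hx.ne' (Real.exp_pos 1).ne', Real.log_exp] at h
    linarith
  have key : u * Real.log (8 / ε) ≤ 3 := by
    have hlogε : Real.log ε = 2 * Real.log u := by
      rw [← huε, Real.log_mul hu0.ne' hu0.ne']; ring
    have h8 : Real.log (8 / ε) = 3 * Real.log 2 - 2 * Real.log u := by
      rw [Real.log_div (by norm_num) h0.ne', hlogε, show (8:ℝ) = 2 ^ 3 by norm_num,
        Real.log_pow]
      push_cast; ring
    have hul : u * Real.log (1 / u) ≤ 1 / Real.exp 1 := by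
      have h2 := hlog_le (1 / u) (by positivity)
      calc u * Real.log (1 / u) ≤ u * ((1 / u) / Real.exp 1) :=
            mul_le_mul_of_nonneg_left h2 hu0.le
        _ = 1 / Real.exp 1 := by field_simp
    have hlogu : Real.log (1 / u) = -Real.log u := by rw [one_div, Real.log_inv]
    have he : (2.7182818283:ℝ) < Real.exp 1 := Real.exp_one_gt_d9
    have hl2 : Real.log 2 < 0.6931471808 := Real.log_two_lt_d9
    have hl2pos : 0 < Real.log 2 := Real.log_pos (by norm_num)
    have hinv : 1 / Real.exp 1 ≤ 1 / 2.7182818283 :=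
      one_div_le_one_div_of_le (by norm_num) he.le
    rw [h8]
    nlinarith [hul, hlogu]
  nlinarith [mul_le_mul key key (mul_nonneg hu0.le hL0) (by norm_num : (0:ℝ) ≤ 3), huε, hL0,
    hu0.le]

theorem truncated_cluster_expansion_stability {V P : Type*} [Fintype V] [DecidableEq V]
    [Fintype P] (G : SimpleGraph V) (vset : P → Finset V)
    (size : P → ℕ) (hsize : ∀ γ, 1 ≤ size γ)
    (w wt : P → ℝ) (hw : ∀ γ, 0 < w γ) (hwt : ∀ γ, 0 < wt γ)
    (ε m : ℝ) (hε0 : 0 < ε) (hεN : ε < 1 / (Fintype.card V : ℝ))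
    (hm : m = Real.log (8 / ε) / 3)
    (htail : ∀ k : ℕ,
      ∑' Γ : {Γ : List P // IsCluster vset Γ ∧ (Γ.map size).sum = k},
          |ursell Γ.val.length (incompatGraph vset Γ.val) * (Γ.val.map w).prod| ≤
        (Fintype.card V : ℝ) * Real.exp (-3 * k))
    (happrox : ∀ γ : P, (size γ : ℝ) ≤ m →
      |Real.log (wt γ) - Real.log (w γ)| ≤ ε * (size γ : ℝ) ^ 2) :
    |truncatedClusterExpansion vset size wt m - truncatedClusterExpansion vset size w m| ≤
      (Fintype.card V : ℝ) * ε / 8 := by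
  classical
  have hcard : 1 ≤ Fintype.card V := by
    rcases Nat.eq_zero_or_pos (Fintype.card V) with h | h
    · rw [h] at hεN; norm_num at hεN; linarith
    · exact h
  have hN1 : (1:ℝ) ≤ (Fintype.card V : ℝ) := by exact_mod_cast hcard
  have hN0 : (0:ℝ) ≤ (Fintype.card V : ℝ) := by linarith
  have hε1 : ε ≤ 1 := by
    have h2 : 1 / (Fintype.card V : ℝ) ≤ 1 := by
      rw [div_le_one (by linarith)]; exact hN1
    linarith
  have hεm2 : ε * m ^ 2 ≤ 1 := by rw [hm]; exact my_eps_m_sq hε0 hε1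
  set r : P → ℝ := fun γ => Real.log (wt γ) - Real.log (w γ) with hr
  haveI : Finite {Γ : List P // IsCluster vset Γ ∧ ((Γ.map size).sum : ℝ) < m} :=
    my_finite_cluster size hsize _ ⌈m⌉₊ (fun Γ h => by
      have h2 : ((Γ.map size).sum : ℝ) ≤ (⌈m⌉₊ : ℝ) := le_trans h.2.le (Nat.le_ceil m)
      exact_mod_cast h2)
  haveI := Fintype.ofFinite {Γ : List P // IsCluster vset Γ ∧ ((Γ.map size).sum : ℝ) < m}
  unfold truncatedClusterExpansion
  rw [tsum_fintype, tsum_fintype, ← Finset.sum_sub_distrib]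
  refine le_trans (Finset.abs_sum_le_sum_abs _ _) ?_
  refine le_trans (Finset.sum_le_sum
    (g := fun Γ : {Γ : List P // IsCluster vset Γ ∧ ((Γ.map size).sum : ℝ) < m} =>
      2 * ε * ((Γ.val.map size).sum : ℝ) ^ 2 *
        |ursell Γ.val.length (incompatGraph vset Γ.val) * (Γ.val.map w).prod|)
    (fun Γ _ => ?_)) ?_
  · -- termwise bound
    obtain ⟨l, hcl, hlt⟩ := Γ
    dsimp only
    have hPw : 0 < (l.map w).prod := List.prod_pos (by
      intro a ha
      simp only [List.mem_map] at ha
      obtain ⟨γ, _, rfl⟩ := ha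
      exact hw γ)
    have hsize_le : ∀ γ ∈ l, (size γ : ℝ) ≤ m := by
      intro γ hγ
      have h1 : size γ ≤ (l.map size).sum :=
        List.single_le_sum (fun x _ => Nat.zero_le x) _ (List.mem_map_of_mem (f := size) hγ)
      have h1' : (size γ : ℝ) ≤ ((l.map size).sum : ℝ) := by exact_mod_cast h1
      linarith [hlt]
    have hR : |(l.map r).sum| ≤ ε * ((l.map size).sum : ℝ) ^ 2 := by
      refine le_trans (my_abs_list_sum _) ?_
      rw [List.map_map]
      have h1 : (l.map (abs ∘ r)).sum ≤ (l.map (fun γ => ε * (size γ : ℝ) ^ 2)).sum :=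
        List.sum_le_sum (fun γ hγ => happrox γ (hsize_le γ hγ))
      refine le_trans h1 ?_
      rw [List.sum_map_mul_left]
      refine mul_le_mul_of_nonneg_left ?_ hε0.le
      have h2 := my_sq_sum (l.map (fun γ => (size γ : ℝ))) (by
        intro x hx
        simp only [List.mem_map] at hx
        obtain ⟨γ, _, rfl⟩ := hx
        positivity)
      rw [List.map_map] at h2
      have h3 : ((l.map size).sum : ℝ) = (l.map (fun γ => (size γ : ℝ))).sum := by
        rw [Nat.cast_list_sum, List.map_map]; rfl
      rw [h3]
      simpa [Function.comp_def] using h2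
    have hK2 : ε * ((l.map size).sum : ℝ) ^ 2 ≤ 1 := by
      have hksq : ((l.map size).sum : ℝ) ^ 2 ≤ m ^ 2 :=
        pow_le_pow_left₀ (by positivity) hlt.le 2
      nlinarith
    have hR1 : |(l.map r).sum| ≤ 1 := hR.trans hK2
    have hexp : |Real.exp ((l.map r).sum) - 1| ≤ 2 * (ε * ((l.map size).sum : ℝ) ^ 2) := by
      have h := Real.exp_bound hR1 one_pos
      norm_num [Finset.sum_range_one] at h
      linarith [hR]
    have hprod : (l.map wt).prod = (l.map w).prod * Real.exp ((l.map r).sum) := by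
      have hwt_eq : wt = fun γ => w γ * Real.exp (r γ) := funext fun γ => by
        rw [hr]
        dsimp only
        rw [Real.exp_sub, Real.exp_log (hwt γ), Real.exp_log (hw γ)]
        rw [mul_div_cancel₀ _ (hw γ).ne']
      calc (l.map wt).prod = (l.map (fun γ => w γ * Real.exp (r γ))).prod := by
              rw [← hwt_eq]
        _ = (l.map w).prod * (l.map (fun γ => Real.exp (r γ))).prod := List.prod_map_mul
        _ = (l.map w).prod * Real.exp ((l.map r).sum) := by
              rw [Real.exp_list_sum, List.map_map]; rfl
    rw [hprod]
    have heq : ursell l.length (incompatGraph vset l) * ((l.map w).prod *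
        Real.exp ((l.map r).sum)) - ursell l.length (incompatGraph vset l) * (l.map w).prod
        = (ursell l.length (incompatGraph vset l) * (l.map w).prod) *
          (Real.exp ((l.map r).sum) - 1) := by ring
    rw [heq, abs_mul]
    calc |ursell l.length (incompatGraph vset l) * (l.map w).prod| *
          |Real.exp ((l.map r).sum) - 1|
        ≤ |ursell l.length (incompatGraph vset l) * (l.map w).prod| *
          (2 * (ε * ((l.map size).sum : ℝ) ^ 2)) :=
          mul_le_mul_of_nonneg_left hexp (abs_nonneg _)
      _ = 2 * ε * ((l.map size).sum : ℝ) ^ 2 *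
          |ursell l.length (incompatGraph vset l) * (l.map w).prod| := by ring
  · -- fiberwise regrouping
    have hmaps : ∀ Γ ∈ (Finset.univ :
        Finset {Γ : List P // IsCluster vset Γ ∧ ((Γ.map size).sum : ℝ) < m}),
        (Γ.val.map size).sum ∈ Finset.Icc 1 ⌈m⌉₊ := by
      intro Γ _
      rw [Finset.mem_Icc]
      constructor
      · have h1 : Γ.val.length ≤ (Γ.val.map size).sum := by
          have := List.length_le_sum_of_one_le (Γ.val.map size) (by
            intro i hi
            simp only [List.mem_map] at hi
            obtain ⟨γ, _, rfl⟩ := hi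
            exact hsize γ)
          simpa using this
        have h2 : 0 < Γ.val.length := List.length_pos_iff.2 Γ.prop.1.1
        omega
      · have h2 : ((Γ.val.map size).sum : ℝ) ≤ (⌈m⌉₊ : ℝ) :=
          le_trans Γ.prop.2.le (Nat.le_ceil m)
        exact_mod_cast h2
    rw [← Finset.sum_fiberwise_of_maps_to hmaps]
    have hperk : ∀ k ∈ Finset.Icc 1 ⌈m⌉₊,
        (∑ Γ ∈ Finset.univ.filter (fun Γ :
            {Γ : List P // IsCluster vset Γ ∧ ((Γ.map size).sum : ℝ) < m} =>
            (Γ.val.map size).sum = k),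
          2 * ε * ((Γ.val.map size).sum : ℝ) ^ 2 *
            |ursell Γ.val.length (incompatGraph vset Γ.val) * (Γ.val.map w).prod|)
        ≤ ε * (Fintype.card V : ℝ) / 2 * (1 / 5 : ℝ) ^ k := by
      intro k hk
      have hk1 : 1 ≤ k := (Finset.mem_Icc.1 hk).1
      haveI : Finite {Γ : List P // IsCluster vset Γ ∧ (Γ.map size).sum = k} :=
        my_finite_cluster size hsize _ k (fun Γ h => h.2.le)
      haveI := Fintype.ofFinite {Γ : List P // IsCluster vset Γ ∧ (Γ.map size).sum = k}
      have htk := htail k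
      rw [tsum_fintype] at htk
      have hcongr : (∑ Γ ∈ Finset.univ.filter (fun Γ :
            {Γ : List P // IsCluster vset Γ ∧ ((Γ.map size).sum : ℝ) < m} =>
            (Γ.val.map size).sum = k),
          2 * ε * ((Γ.val.map size).sum : ℝ) ^ 2 *
            |ursell Γ.val.length (incompatGraph vset Γ.val) * (Γ.val.map w).prod|)
          = 2 * ε * (k : ℝ) ^ 2 * ∑ Γ ∈ Finset.univ.filter (fun Γ :
            {Γ : List P // IsCluster vset Γ ∧ ((Γ.map size).sum : ℝ) < m} =>
            (Γ.val.map size).sum = k),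
            |ursell Γ.val.length (incompatGraph vset Γ.val) * (Γ.val.map w).prod| := by
        rw [Finset.mul_sum]
        refine Finset.sum_congr rfl ?_
        intro Γ hΓ
        rw [(Finset.mem_filter.1 hΓ).2]
      rw [hcongr]
      have hsum_le : (∑ Γ ∈ Finset.univ.filter (fun Γ :
            {Γ : List P // IsCluster vset Γ ∧ ((Γ.map size).sum : ℝ) < m} =>
            (Γ.val.map size).sum = k),
            |ursell Γ.val.length (incompatGraph vset Γ.val) * (Γ.val.map w).prod|)
          ≤ (Fintype.card V : ℝ) * Real.exp (-3 * k) := by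
        refine le_trans ?_ htk
        have e1 := Finset.sum_image (s := Finset.univ.filter (fun Γ :
            {Γ : List P // IsCluster vset Γ ∧ ((Γ.map size).sum : ℝ) < m} =>
            (Γ.val.map size).sum = k)) (g := Subtype.val)
          (f := fun l : List P => |ursell l.length (incompatGraph vset l) * (l.map w).prod|)
          (fun x _ y _ h => Subtype.ext h)
        have e2 := Finset.sum_image (s := (Finset.univ :
            Finset {Γ : List P // IsCluster vset Γ ∧ (Γ.map size).sum = k}))
          (g := Subtype.val)
          (f := fun l : List P => |ursell l.length (incompatGraph vset l) * (l.map w).prod|)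
          (fun x _ y _ h => Subtype.ext h)
        rw [← e1, ← e2]
        refine Finset.sum_le_sum_of_subset_of_nonneg ?_ (fun _ _ _ => abs_nonneg _)
        intro l hl
        simp only [Finset.mem_image, Finset.mem_filter, Finset.mem_univ, true_and] at hl ⊢
        obtain ⟨Γ, hΓk, rfl⟩ := hl
        exact ⟨⟨Γ.val, Γ.prop.1, hΓk⟩, rfl⟩
      have hexp3 : Real.exp (-3 * (k : ℝ)) ≤ (1 / 20 : ℝ) ^ k := by
        have h1 : Real.exp (-3 * (k : ℝ)) = Real.exp (-3) ^ k := by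
          rw [show (-3 : ℝ) * (k : ℝ) = (k : ℝ) * (-3) by ring, Real.exp_nat_mul]
        rw [h1]
        refine pow_le_pow_left₀ (Real.exp_pos _).le ?_ k
        have he : (2.7182818283:ℝ) < Real.exp 1 := Real.exp_one_gt_d9
        have h3 : (20:ℝ) ≤ Real.exp 3 := by
          have h31 : Real.exp 3 = (Real.exp 1) ^ 3 := by
            rw [show (3:ℝ) = ((3:ℕ):ℝ) * 1 by norm_num, Real.exp_nat_mul]
          have h32 : (2.7182818283:ℝ) ^ 3 ≤ (Real.exp 1) ^ 3 :=
            pow_le_pow_left₀ (by norm_num) he.le 3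
          have h33 : (20:ℝ) ≤ (2.7182818283:ℝ) ^ 3 := by norm_num
          rw [h31]; linarith
        have hmul : Real.exp (-3) * Real.exp 3 = 1 := by
          rw [← Real.exp_add]; norm_num
        nlinarith [Real.exp_pos (-3)]
      have h4k : (4:ℝ) * (k:ℝ) ^ 2 ≤ 4 ^ k := by exact_mod_cast my_four_k_sq k hk1
      have h5 : (k:ℝ) ^ 2 * Real.exp (-3 * (k:ℝ)) ≤ (1/4) * (1/5 : ℝ) ^ k := by
        calc (k:ℝ) ^ 2 * Real.exp (-3 * (k:ℝ)) ≤ (k:ℝ) ^ 2 * (1/20 : ℝ) ^ k :=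
              mul_le_mul_of_nonneg_left hexp3 (by positivity)
          _ ≤ ((1/4) * 4 ^ k) * (1/20 : ℝ) ^ k :=
              mul_le_mul_of_nonneg_right (by linarith) (by positivity)
          _ = (1/4) * (1/5 : ℝ) ^ k := by
              rw [mul_assoc, ← mul_pow]; norm_num
      calc 2 * ε * (k : ℝ) ^ 2 * (∑ Γ ∈ Finset.univ.filter (fun Γ :
            {Γ : List P // IsCluster vset Γ ∧ ((Γ.map size).sum : ℝ) < m} =>
            (Γ.val.map size).sum = k),
            |ursell Γ.val.length (incompatGraph vset Γ.val) * (Γ.val.map w).prod|)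
          ≤ 2 * ε * (k : ℝ) ^ 2 * ((Fintype.card V : ℝ) * Real.exp (-3 * k)) :=
            mul_le_mul_of_nonneg_left hsum_le (by positivity)
        _ = 2 * ε * (Fintype.card V : ℝ) * ((k:ℝ) ^ 2 * Real.exp (-3 * (k:ℝ))) := by ring
        _ ≤ 2 * ε * (Fintype.card V : ℝ) * ((1/4) * (1/5 : ℝ) ^ k) :=
            mul_le_mul_of_nonneg_left h5 (by positivity)
        _ = ε * (Fintype.card V : ℝ) / 2 * (1 / 5 : ℝ) ^ k := by ring
    refine le_trans (Finset.sum_le_sum hperk) ?_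
    rw [← Finset.mul_sum]
    calc ε * (Fintype.card V : ℝ) / 2 * ∑ k ∈ Finset.Icc 1 ⌈m⌉₊, (1 / 5 : ℝ) ^ k
        ≤ ε * (Fintype.card V : ℝ) / 2 * (1/4) :=
          mul_le_mul_of_nonneg_left (my_geom_icc _) (by positivity)
      _ = (Fintype.card V : ℝ) * ε / 8 := by ring
end
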